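/- Let ψ∈Nₙ and α,γ∈Pₙ be such that ⟨↓[ψ]α≠↓[ψ]α⟩∧¬⟨↓[ψ]γ≠↓[ψ]γ⟩ is XP-consistent and ¬⟨α≠α⟩ is a conjunct of ψ. Then ¬⟨α=γ⟩ is a conjunct of ψ. -/

import Mathlib

attribute [local instance] Classical.propDecidable

mutual
inductive PathExpr (A : Type) : Type
  | eps : PathExpr A
  | down : PathExpr A
  | test : NodeExpr A → PathExpr A
  | comp : PathExpr A → PathExpr A → PathExpr A
  | union : PathExpr A → PathExpr A → PathExpr A

inductive NodeExpr (A : Type) : Type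
  | lab : A → NodeExpr A
  | neg : NodeExpr A → NodeExpr A
  | conj : NodeExpr A → NodeExpr A → NodeExpr A
  | diam : PathExpr A → NodeExpr A
  | eqTest : PathExpr A → PathExpr A → NodeExpr A
  | neqTest : PathExpr A → PathExpr A → NodeExpr A
end

namespace XPath

variable {A : Type}

/-- Defined disjunction `φ ∨ ψ := ¬(¬φ ∧ ¬ψ)`. -/
def nOr (φ ψ : NodeExpr A) : NodeExpr A := .neg (.conj (.neg φ) (.neg ψ))

/-- `⊤ := ⟨ε⟩`. -/
def topN : NodeExpr A := .diam .eps

/-- `⊥ := ¬⊤`. -/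
def botN : NodeExpr A := .neg topN

/-- `⊥̄ := [¬⟨ε⟩]`. -/
def botP : PathExpr A := .test (.neg (.diam .eps))

def bigOr (l : List (NodeExpr A)) : NodeExpr A := l.foldr nOr botN

def bigUnion (l : List (PathExpr A)) : PathExpr A := l.foldr PathExpr.union botP

/-- A data tree: a tree (connected, acyclic, unique parents except the root)
whose nodes carry labels from `A`, together with a partition of the nodes
(presented as an equivalence relation `eqd`). -/
structure DataTree (A : Type) where
  X : Type
  child : X → X → Prop
  root : X
  label : X → A
  eqd : X → X → Prop
  eqd_equiv : Equivalence eqd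
  parent_unique : ∀ ⦃x y z : X⦄, child x z → child y z → x = y
  root_no_parent : ∀ x : X, ¬ child x root
  reach : ∀ x : X, Relation.ReflTransGen child root x
  acyclic : ∀ x : X, ¬ Relation.TransGen child x x

mutual
/-- Semantics of path expressions. -/
def psem (T : DataTree A) : PathExpr A → T.X → T.X → Prop
  | .eps, x, y => x = y
  | .down, x, y => T.child x y
  | .test φ, x, y => x = y ∧ nsem T φ x
  | .comp α β, x, z => ∃ y, psem T α x y ∧ psem T β y z
  | .union α β, x, y => psem T α x y ∨ psem T β x y

/-- Semantics of node expressions. -/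
def nsem (T : DataTree A) : NodeExpr A → T.X → Prop
  | .lab a, x => T.label x = a
  | .neg φ, x => ¬ nsem T φ x
  | .conj φ ψ, x => nsem T φ x ∧ nsem T ψ x
  | .diam α, x => ∃ y, psem T α x y
  | .eqTest α β, x => ∃ y z, psem T α x y ∧ psem T β x z ∧ T.eqd y z
  | .neqTest α β, x => ∃ y z, psem T α x y ∧ psem T β x z ∧ ¬ T.eqd y z
end

/-- Semantic equivalence of node expressions: same denotation in every data tree. -/
def nodeValid (φ ψ : NodeExpr A) : Prop :=
  ∀ (T : DataTree A) (x : T.X), nsem T φ x ↔ nsem T ψ x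

/-- Semantic equivalence of path expressions: same denotation in every data tree. -/
def pathValid (α β : PathExpr A) : Prop :=
  ∀ (T : DataTree A) (x y : T.X), psem T α x y ↔ psem T β x y

mutual
/-- Derivability of node equivalences in the axiomatic system `XP`. -/
inductive NDer {A : Type} [Fintype A] : NodeExpr A → NodeExpr A → Prop
  | refl (φ : NodeExpr A) : NDer φ φ
  | symm {φ ψ : NodeExpr A} : NDer φ ψ → NDer ψ φ
  | trans {φ ψ ρ : NodeExpr A} : NDer φ ψ → NDer ψ ρ → NDer φ ρ
  | congr_neg {φ ψ : NodeExpr A} : NDer φ ψ → NDer (.neg φ) (.neg ψ)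
  | congr_conj {φ φ' ψ ψ' : NodeExpr A} :
      NDer φ φ' → NDer ψ ψ' → NDer (.conj φ ψ) (.conj φ' ψ')
  | congr_diam {α β : PathExpr A} : PDer α β → NDer (.diam α) (.diam β)
  | congr_eqTest {α α' β β' : PathExpr A} :
      PDer α α' → PDer β β' → NDer (.eqTest α β) (.eqTest α' β')
  | congr_neqTest {α α' β β' : PathExpr A} :
      PDer α α' → PDer β β' → NDer (.neqTest α β) (.neqTest α' β')
  | lbAx1 : NDer topN (bigOr ((Finset.univ : Finset A).toList.map NodeExpr.lab))
  | lbAx2 {a b : A} : a ≠ b → NDer botN (.conj (.lab a) (.lab b))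
  | ndAx1 (φ ψ : NodeExpr A) :
      NDer φ (nOr (.neg (nOr (.neg φ) ψ)) (.neg (nOr (.neg φ) (.neg ψ))))
  | ndAx2 (φ : NodeExpr A) : NDer (.diam (.test φ)) φ
  | ndAx3 (α β : PathExpr A) : NDer (.diam (.union α β)) (nOr (.diam α) (.diam β))
  | ndAx4 (α β : PathExpr A) : NDer (.diam (.comp α β)) (.diam (.comp α (.test (.diam β))))
  | eqAx1 (α β : PathExpr A) : NDer (.eqTest α β) (.eqTest β α)
  | eqAx2 (α β γ : PathExpr A) :
      NDer (.eqTest (.union α β) γ) (nOr (.eqTest α γ) (.eqTest β γ))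
  | eqAx3 (φ : NodeExpr A) (α β : PathExpr A) :
      NDer (.conj φ (.eqTest α β)) (.eqTest (.comp (.test φ) α) β)
  | eqAx4 (α β : PathExpr A) : NDer (nOr (.eqTest α β) (.diam α)) (.diam α)
  | eqAx5 (γ α β : PathExpr A) :
      NDer (nOr (.diam (.comp γ (.test (.eqTest α β)))) (.eqTest (.comp γ α) (.comp γ β)))
        (.eqTest (.comp γ α) (.comp γ β))
  | eqAx6 (α : PathExpr A) : NDer (.eqTest α α) (.diam α)
  | eqAx7 (α β : PathExpr A) :
      NDer (nOr (.conj (.eqTest α .eps) (.eqTest β .eps)) (.eqTest α β)) (.eqTest α β)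
  | eqAx8 (α β γ : PathExpr A) :
      NDer (nOr (.eqTest α (.comp β (.test (.eqTest .eps γ)))) (.eqTest α (.comp β γ)))
        (.eqTest α (.comp β γ))
  | neqAx1 (α β : PathExpr A) : NDer (.neqTest α β) (.neqTest β α)
  | neqAx2 (α β γ : PathExpr A) :
      NDer (.neqTest (.union α β) γ) (nOr (.neqTest α γ) (.neqTest β γ))
  | neqAx3 (φ : NodeExpr A) (α β : PathExpr A) :
      NDer (.conj φ (.neqTest α β)) (.neqTest (.comp (.test φ) α) β)
  | neqAx4 (α β : PathExpr A) : NDer (nOr (.neqTest α β) (.diam α)) (.diam α)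
  | neqAx5 (γ α β : PathExpr A) :
      NDer (nOr (.diam (.comp γ (.test (.neqTest α β)))) (.neqTest (.comp γ α) (.comp γ β)))
        (.neqTest (.comp γ α) (.comp γ β))
  | neqAx6 (α β γ η : PathExpr A) :
      NDer (nOr (.conj (.eqTest α γ) (.eqTest β η)) (nOr (.eqTest α β) (.neqTest γ η)))
        (nOr (.eqTest α β) (.neqTest γ η))
  | neqAx7 (α β γ η : PathExpr A) :
      NDer (nOr (.conj (.neqTest α γ) (.eqTest β η)) (nOr (.neqTest α β) (.neqTest γ η)))
        (nOr (.neqTest α β) (.neqTest γ η))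
  | neqAx8 (α β γ η : PathExpr A) :
      NDer (nOr (.eqTest γ (.comp η (.comp (.test (.conj (.neg (.eqTest α β)) (.diam α))) β)))
              (.neqTest γ (.comp η α)))
        (.neqTest γ (.comp η α))
  | neqAx9 (α β γ η : PathExpr A) :
      NDer (nOr (.neqTest γ (.comp η (.comp (.test (.conj (.neg (.neqTest α β)) (.diam α))) β)))
              (.neqTest γ (.comp η α)))
        (.neqTest γ (.comp η α))
  | neqAx10 (α β γ η : PathExpr A) :
      NDer (nOr (.eqTest γ (.comp η (.comp (.test (.conj (.neg (.neqTest α α)) (.eqTest α β))) α)))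
              (.eqTest γ (.comp η β)))
        (.eqTest γ (.comp η β))

/-- Derivability of path equivalences in the axiomatic system `XP`. -/
inductive PDer {A : Type} [Fintype A] : PathExpr A → PathExpr A → Prop
  | refl (α : PathExpr A) : PDer α α
  | symm {α β : PathExpr A} : PDer α β → PDer β α
  | trans {α β γ : PathExpr A} : PDer α β → PDer β γ → PDer α γ
  | congr_test {φ ψ : NodeExpr A} : NDer φ ψ → PDer (.test φ) (.test ψ)
  | congr_comp {α α' β β' : PathExpr A} :
      PDer α α' → PDer β β' → PDer (.comp α β) (.comp α' β')
  | congr_union {α α' β β' : PathExpr A} :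
      PDer α α' → PDer β β' → PDer (.union α β) (.union α' β')
  | prAx1 (α β : PathExpr A) : PDer (.comp (.comp α (.test (.neg (.diam β)))) β) botP
  | prAx2 : PDer (.test topN) (.eps : PathExpr A)
  | prAx3 (φ ψ : NodeExpr A) : PDer (.test (nOr φ ψ)) (.union (.test φ) (.test ψ))
  | isAx1 (α β γ : PathExpr A) : PDer (.union (.union α β) γ) (.union α (.union β γ))
  | isAx2 (α β : PathExpr A) : PDer (.union α β) (.union β α)
  | isAx3 (α : PathExpr A) : PDer (.union α α) α
  | isAx4 (α β γ : PathExpr A) : PDer (.comp α (.comp β γ)) (.comp (.comp α β) γ)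
  | isAx5l (α : PathExpr A) : PDer (.comp .eps α) α
  | isAx5r (α : PathExpr A) : PDer (.comp α .eps) α
  | isAx6l (α β γ : PathExpr A) :
      PDer (.comp α (.union β γ)) (.union (.comp α β) (.comp α γ))
  | isAx6r (α β γ : PathExpr A) :
      PDer (.comp (.union α β) γ) (.union (.comp α γ) (.comp β γ))
  | isAx7 (α : PathExpr A) : PDer (.union botP α) α
end

/-- A node expression is `XP`-consistent if it is not provably equivalent to `⊥`. -/
def NConsistent [Fintype A] (φ : NodeExpr A) : Prop := ¬ NDer φ botN

/-- A path expression is `XP`-consistent if it is not provably equivalent to `⊥̄`. -/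
def PConsistent [Fintype A] (α : PathExpr A) : Prop := ¬ PDer α botP

/-- The normal form `a ∧ ⋀_{d ∈ C} d ∧ ⋀_{d ∈ D∖C} ¬d`, built along the canonical listing `D`. -/
noncomputable def mkNF (a : A) (C D : List (NodeExpr A)) : NodeExpr A :=
  D.foldl (fun acc d => .conj acc (if d ∈ C then d else .neg d)) (.lab a)

/-- The canonical lists of normal-form path expressions (first component)
and normal-form node expressions (second component) at each level. -/
noncomputable def NF (A : Type) [Fintype A] : ℕ → List (PathExpr A) × List (NodeExpr A)
  | 0 =>
    ([.eps],
      (Finset.univ : Finset A).toList.map fun a =>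
        NodeExpr.conj (.conj (.lab a) (.eqTest .eps .eps)) (.neg (.neqTest .eps .eps)))
  | n+1 =>
    let P := (NF A n).1
    let N := (NF A n).2
    let P' : List (PathExpr A) :=
      .eps :: N.flatMap fun ψ => P.map fun β => PathExpr.comp .down (.comp (.test ψ) β)
    let D : List (NodeExpr A) :=
      (P'.flatMap fun α => P'.map fun β => NodeExpr.eqTest α β) ++
      (P'.flatMap fun α => P'.map fun β => NodeExpr.neqTest α β)
    let cands : List (NodeExpr A) :=
      D.sublists.flatMap fun C => (Finset.univ : Finset A).toList.map fun a => mkNF a C D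
    (P', cands.filter fun φ => decide (NConsistent φ))

/-- `Pₙ`: normal-form path expressions of level `n`. -/
noncomputable def Pnf (A : Type) [Fintype A] (n : ℕ) : Set (PathExpr A) :=
  {α | α ∈ (NF A n).1}

/-- `Nₙ`: normal-form node expressions of level `n`. -/
noncomputable def Nnf (A : Type) [Fintype A] (n : ℕ) : Set (NodeExpr A) :=
  {φ | φ ∈ (NF A n).2}

/-- `Dₙ`: data-aware diamonds between normal-form paths of level `n`. -/
noncomputable def Dnf (A : Type) [Fintype A] (n : ℕ) : Set (NodeExpr A) :=
  {φ | ∃ α ∈ Pnf A n, ∃ β ∈ Pnf A n, φ = NodeExpr.eqTest α β ∨ φ = NodeExpr.neqTest α β}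

/-- The conjuncts of a node expression (flattening `∧`). -/
def conjuncts : NodeExpr A → List (NodeExpr A)
  | .conj φ ψ => conjuncts φ ++ conjuncts ψ
  | φ => [φ]

/-- `δ` is a conjunct of `ψ`. -/
def IsConjunct (δ ψ : NodeExpr A) : Prop := δ ∈ conjuncts ψ

/-- Length of a path expression. -/
def plen : PathExpr A → ℕ
  | .eps => 0
  | .down => 1
  | .test _ => 0
  | .comp α β => plen α + plen β
  | .union α β => max (plen α) (plen β)

mutual
/-- Downward depth of a node expression. -/
def ndd : NodeExpr A → ℕ
  | .lab _ => 0
  | .neg φ => ndd φ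
  | .conj φ ψ => max (ndd φ) (ndd ψ)
  | .diam α => pdd α
  | .eqTest α β => max (pdd α) (pdd β)
  | .neqTest α β => max (pdd α) (pdd β)

/-- Downward depth of a path expression. -/
def pdd : PathExpr A → ℕ
  | .eps => 0
  | .down => 1
  | .test φ => ndd φ
  | .comp α β => max (max (pdd α) (pdd β)) (plen α + pdd β)
  | .union α β => max (pdd α) (pdd β)
end

/-- The path `↓[ψ₁]…↓[ψ_k]α`. -/
def prefixPath : List (NodeExpr A) → PathExpr A → PathExpr A
  | [], α => α
  | ψ :: l, α => .comp .down (.comp (.test ψ) (prefixPath l α))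

/-- The path `↓[ψ]α`. -/
def dPath (ψ : NodeExpr A) (α : PathExpr A) : PathExpr A :=
  .comp .down (.comp (.test ψ) α)

/-- A path expression whose leftmost symbol is `↓`. -/
def startsWithDown : PathExpr A → Prop
  | .down => True
  | .comp α _ => startsWithDown α
  | _ => False

/-- The subtree of `T` hanging from `x`, with the restricted partition. -/
def DataTree.restrict (T : DataTree A) (x : T.X) : DataTree A where
  X := {y : T.X // Relation.ReflTransGen T.child x y}
  child y z := T.child y.1 z.1
  root := ⟨x, Relation.ReflTransGen.refl⟩
  label y := T.label y.1
  eqd y z := T.eqd y.1 z.1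
  eqd_equiv :=
    ⟨fun y => T.eqd_equiv.refl y.1, fun h => T.eqd_equiv.symm h,
      fun h h' => T.eqd_equiv.trans h h'⟩
  parent_unique := by
    intro a b c hac hbc
    exact Subtype.ext (T.parent_unique hac hbc)
  root_no_parent := by
    intro y hy
    exact T.acyclic x (Relation.TransGen.tail' y.2 hy)
  reach := by
    rintro ⟨y, hy⟩
    induction hy with
    | refl => exact Relation.ReflTransGen.refl
    | @tail b c hxb hbc ih => exact Relation.ReflTransGen.tail (ih) hbc
  acyclic := by
    rintro y hy
    have key : ∀ a b, Relation.TransGen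
        (fun y z : {y : T.X // Relation.ReflTransGen T.child x y} => T.child y.1 z.1) a b →
        Relation.TransGen T.child a.1 b.1 := by
      intro a b h
      induction h with
      | single h => exact Relation.TransGen.single h
      | tail _ h ih => exact Relation.TransGen.tail ih h
    exact T.acyclic y.1 (key y y hy)

end XPath

namespace XPath
section Aux
variable {A : Type} [Fintype A]

/-! ### Path-level order -/

def Ple (a b : PathExpr A) : Prop := PDer (PathExpr.union a b) b

lemma ple_refl (a : PathExpr A) : Ple a a := PDer.isAx3 a

lemma ple_congr {a a' b b' : PathExpr A} (h1 : PDer a a') (h2 : PDer b b')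
    (h : Ple a b) : Ple a' b' :=
  ((PDer.congr_union h1.symm h2.symm).trans h).trans h2

lemma ple_trans {a b c : PathExpr A} (h1 : Ple a b) (h2 : Ple b c) : Ple a c :=
  (PDer.congr_union (PDer.refl a) h2.symm).trans
    (((PDer.isAx1 a b c).symm).trans ((PDer.congr_union h1 (PDer.refl c)).trans h2))

lemma ple_union_left (a b : PathExpr A) : Ple a (.union a b) :=
  (PDer.isAx1 a a b).symm.trans (PDer.congr_union (PDer.isAx3 a) (PDer.refl b))

lemma ple_union_right (a b : PathExpr A) : Ple b (.union a b) :=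
  ple_congr (PDer.refl b) (PDer.isAx2 b a) (ple_union_left b a)

lemma ple_lub {a b c : PathExpr A} (h1 : Ple a c) (h2 : Ple b c) : Ple (.union a b) c :=
  (PDer.isAx1 a b c).trans ((PDer.congr_union (PDer.refl a) h2).trans h1)

lemma ple_bot (a : PathExpr A) : Ple botP a := PDer.isAx7 a

lemma ple_antisymm {a b : PathExpr A} (h1 : Ple a b) (h2 : Ple b a) : PDer a b :=
  h2.symm.trans ((PDer.isAx2 b a).trans h1)

lemma ple_comp {a a' b b' : PathExpr A} (h1 : Ple a a') (h2 : Ple b b') :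
    Ple (.comp a b) (.comp a' b') := by
  have s1 : Ple (PathExpr.comp a b) (.comp a' b) :=
    (PDer.isAx6r a a' b).symm.trans (PDer.congr_comp h1 (PDer.refl b))
  have s2 : Ple (PathExpr.comp a' b) (.comp a' b') :=
    (PDer.isAx6l a' b b').symm.trans (PDer.congr_comp (PDer.refl a') h2)
  exact ple_trans s1 s2

/-! ### Node-level basics -/

lemma nder_of_test {φ ψ : NodeExpr A} (h : PDer (.test φ) (.test ψ)) : NDer φ ψ :=
  (NDer.ndAx2 φ).symm.trans ((NDer.congr_diam h).trans (NDer.ndAx2 ψ))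

lemma nder_or_congr {a a' b b' : NodeExpr A} (h1 : NDer a a') (h2 : NDer b b') :
    NDer (nOr a b) (nOr a' b') :=
  NDer.congr_neg (NDer.congr_conj (NDer.congr_neg h1) (NDer.congr_neg h2))

lemma nor_comm (a b : NodeExpr A) : NDer (nOr a b) (nOr b a) :=
  nder_of_test ((PDer.prAx3 a b).trans ((PDer.isAx2 _ _).trans (PDer.prAx3 b a).symm))

lemma nor_assoc (a b c : NodeExpr A) : NDer (nOr (nOr a b) c) (nOr a (nOr b c)) :=
  nder_of_test <| (PDer.prAx3 _ c).trans <|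
    (PDer.congr_union (PDer.prAx3 a b) (PDer.refl _)).trans <|
    (PDer.isAx1 _ _ _).trans <|
    (PDer.congr_union (PDer.refl _) (PDer.prAx3 b c).symm).trans (PDer.prAx3 a _).symm

lemma nor_idem (a : NodeExpr A) : NDer (nOr a a) a :=
  nder_of_test ((PDer.prAx3 a a).trans (PDer.isAx3 _))

def Nle (a b : NodeExpr A) : Prop := NDer (nOr a b) b

lemma nle_refl (a : NodeExpr A) : Nle a a := nor_idem a

lemma nle_congr {a a' b b' : NodeExpr A} (h1 : NDer a a') (h2 : NDer b b')
    (h : Nle a b) : Nle a' b' :=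
  ((nder_or_congr h1.symm h2.symm).trans h).trans h2

lemma nle_of_nder {a b : NodeExpr A} (h : NDer a b) : Nle a b :=
  (nder_or_congr h (NDer.refl b)).trans (nor_idem b)

lemma nle_trans {a b c : NodeExpr A} (h1 : Nle a b) (h2 : Nle b c) : Nle a c :=
  (nder_or_congr (NDer.refl a) h2.symm).trans
    (((nor_assoc a b c).symm).trans ((nder_or_congr h1 (NDer.refl c)).trans h2))

lemma nle_or_left (a b : NodeExpr A) : Nle a (nOr a b) :=
  (nor_assoc a a b).symm.trans (nder_or_congr (nor_idem a) (NDer.refl b))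

lemma nle_or_right (a b : NodeExpr A) : Nle b (nOr a b) :=
  nle_congr (NDer.refl b) (nor_comm b a) (nle_or_left b a)

lemma nle_lub {a b c : NodeExpr A} (h1 : Nle a c) (h2 : Nle b c) : Nle (nOr a b) c :=
  (nor_assoc a b c).trans ((nder_or_congr (NDer.refl a) h2).trans h1)

lemma nle_antisymm {a b : NodeExpr A} (h1 : Nle a b) (h2 : Nle b a) : NDer a b :=
  h2.symm.trans ((nor_comm b a).trans h1)

lemma nle_bot (a : NodeExpr A) : Nle (botN : NodeExpr A) a :=
  nder_of_test ((PDer.prAx3 botN a).trans (PDer.isAx7 _))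

/-! ### Boolean algebra from the Huntington axiom -/

lemma hP1 (x y : NodeExpr A) : Nle (.neg (nOr (.neg x) y)) x := by
  set a := NodeExpr.neg (nOr (.neg x) y) with ha
  set b := NodeExpr.neg (nOr (.neg x) (.neg y)) with hb
  have H : NDer x (nOr a b) := NDer.ndAx1 x y
  have : NDer (nOr a x) x :=
    (nder_or_congr (NDer.refl a) H).trans
      (((nor_assoc a a b).symm).trans ((nder_or_congr (nor_idem a) (NDer.refl b)).trans H.symm))
  exact this

lemma dn_le (x : NodeExpr A) : Nle (.neg (.neg x)) x := by
  have H : NDer x (nOr (.neg (nOr (.neg x) (.neg x))) (.neg (nOr (.neg x) (.neg (.neg x))))) :=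
    NDer.ndAx1 x (.neg x)
  have H2 : NDer x (nOr (.neg (.neg x)) (.neg (nOr (.neg x) (.neg (.neg x))))) :=
    H.trans (nder_or_congr (NDer.congr_neg (nor_idem _)) (NDer.refl _))
  have : NDer (nOr (.neg (.neg x)) x) x :=
    (nder_or_congr (NDer.refl _) H2).trans
      (((nor_assoc _ _ _).symm).trans
        ((nder_or_congr (nor_idem _) (NDer.refl _)).trans H2.symm))
  exact this

lemma dn (x : NodeExpr A) : NDer (.neg (.neg x)) x := by
  have h3 : Nle (NodeExpr.neg (.neg (.neg x))) (.neg x) := dn_le (.neg x)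
  -- x ≡ c ∨ x″  where c = ¬(x′ ∨ x″)
  have e1 : NDer (nOr (NodeExpr.neg x) (.neg (.neg (.neg x)))) (.neg x) :=
    (nor_comm _ _).trans h3
  have H : NDer x (nOr (.neg (nOr (.neg x) (.neg (.neg x))))
      (.neg (nOr (.neg x) (.neg (.neg (.neg x)))))) := NDer.ndAx1 x (.neg (.neg x))
  have e2 : NDer x (nOr (.neg (nOr (.neg x) (.neg (.neg x)))) (.neg (.neg x))) :=
    H.trans (nder_or_congr (NDer.refl _) (NDer.congr_neg e1))
  -- c ≤ x″
  have h4 : Nle (NodeExpr.neg (.neg (.neg x))) (nOr (.neg x) (.neg (.neg x))) :=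
    nle_trans h3 (nle_or_left _ _)
  have h5 : Nle (NodeExpr.neg (nOr (.neg (.neg (.neg x))) (nOr (.neg x) (.neg (.neg x)))))
      (.neg (.neg x)) := hP1 (.neg (.neg x)) (nOr (.neg x) (.neg (.neg x)))
  have h6 : Nle (NodeExpr.neg (nOr (.neg x) (.neg (.neg x)))) (.neg (.neg x)) :=
    nle_congr (NDer.congr_neg h4) (NDer.refl _) h5
  have h7 : Nle x (.neg (.neg x)) :=
    nle_congr e2.symm (NDer.refl _) (nle_lub h6 (nle_refl _))
  exact nle_antisymm (dn_le x) h7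

lemma nle_antitone {a b : NodeExpr A} (h : Nle a b) : Nle (.neg b) (.neg a) := by
  have H : NDer (NodeExpr.neg a) (nOr (.neg (nOr (.neg (.neg a)) b))
      (.neg (nOr (.neg (.neg a)) (.neg b)))) := NDer.ndAx1 (.neg a) b
  have e1 : NDer (nOr (NodeExpr.neg (.neg a)) b) b :=
    (nder_or_congr (dn a) (NDer.refl b)).trans h
  have H2 : NDer (NodeExpr.neg a) (nOr (.neg b) (.neg (nOr (.neg (.neg a)) (.neg b)))) :=
    H.trans (nder_or_congr (NDer.congr_neg e1) (NDer.refl _))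
  have : NDer (nOr (NodeExpr.neg b) (.neg a)) (.neg a) :=
    (nder_or_congr (NDer.refl _) H2).trans
      (((nor_assoc _ _ _).symm).trans
        ((nder_or_congr (nor_idem _) (NDer.refl _)).trans H2.symm))
  exact this

lemma nle_top (a : NodeExpr A) : Nle a (topN : NodeExpr A) := by
  have h := nle_antitone (nle_bot (A := A) (.neg a))
  exact nle_congr (dn a) (dn topN) h

lemma nle_em (y x : NodeExpr A) : Nle y (nOr x (.neg x)) := by
  have H : NDer y (nOr (.neg (nOr (.neg y) x)) (.neg (nOr (.neg y) (.neg x)))) :=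
    NDer.ndAx1 y x
  have h1 : Nle (NodeExpr.neg (nOr (.neg y) x)) (.neg x) :=
    nle_antitone (nle_or_right (.neg y) x)
  have h2 : Nle (NodeExpr.neg (nOr (.neg y) (.neg x))) x :=
    nle_congr (NDer.refl _) (dn x) (nle_antitone (nle_or_right (.neg y) (.neg x)))
  exact nle_congr H.symm (NDer.refl _)
    (nle_lub (nle_trans h1 (nle_or_right x (.neg x))) (nle_trans h2 (nle_or_left x (.neg x))))

lemma em (x : NodeExpr A) : NDer (nOr x (.neg x)) topN :=
  nle_antisymm (nle_top _) (nle_em topN x)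

/-- `x ∧ y ≡ ¬(¬x ∨ ¬y)`. -/
lemma conj_as (x y : NodeExpr A) : NDer (.conj x y) (.neg (nOr (.neg x) (.neg y))) :=
  ((dn (NodeExpr.conj (.neg (.neg x)) (.neg (.neg y)))).trans
    (NDer.congr_conj (dn x) (dn y))).symm

lemma neg_conj (x y : NodeExpr A) : NDer (.neg (.conj x y)) (nOr (.neg x) (.neg y)) :=
  (NDer.congr_neg (conj_as x y)).trans (dn _)

lemma conj_bot (x : NodeExpr A) : NDer (.conj x (.neg x)) botN :=
  (conj_as x (.neg x)).trans <| NDer.congr_neg <|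
    (nder_or_congr (NDer.refl _) (dn x)).trans ((nor_comm _ _).trans (em x))

lemma nle_conj_left (x y : NodeExpr A) : Nle (.conj x y) x :=
  nle_congr (conj_as x y).symm (NDer.refl x) (hP1 x (.neg y))

lemma conj_comm (x y : NodeExpr A) : NDer (.conj x y) (.conj y x) :=
  (conj_as x y).trans ((NDer.congr_neg (nor_comm _ _)).trans (conj_as y x).symm)

lemma nle_conj_right (x y : NodeExpr A) : Nle (.conj x y) y :=
  nle_congr (conj_comm y x) (NDer.refl y) (nle_conj_left y x)

lemma nle_conj_intro {z x y : NodeExpr A} (h1 : Nle z x) (h2 : Nle z y) :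
    Nle z (.conj x y) := by
  have h : Nle (nOr (NodeExpr.neg x) (.neg y)) (.neg z) :=
    nle_lub (nle_antitone h1) (nle_antitone h2)
  have h' : Nle (NodeExpr.neg (.neg z)) (.neg (nOr (.neg x) (.neg y))) := nle_antitone h
  exact nle_congr (dn z) (conj_as x y).symm h'

lemma nle_bot_iff {a : NodeExpr A} (h : Nle a botN) : NDer a botN :=
  nle_antisymm h (nle_bot a)

/-- Weak distribution (Huntington form): `x ≡ (x∧¬w) ∨ (x∧w)`. -/
lemma wdist (x w : NodeExpr A) : NDer x (nOr (.conj x (.neg w)) (.conj x w)) := by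
  have H : NDer x (nOr (.neg (nOr (.neg x) w)) (.neg (nOr (.neg x) (.neg w)))) :=
    NDer.ndAx1 x w
  have e1 : NDer (NodeExpr.conj x (.neg w)) (.neg (nOr (.neg x) w)) :=
    (conj_as x (.neg w)).trans (NDer.congr_neg (nder_or_congr (NDer.refl _) (dn w)))
  exact H.trans (nder_or_congr e1.symm (conj_as x w).symm)

/-- From `Nle x y`: `x∧¬y ≡ ⊥`. -/
lemma conj_neg_bot {x y : NodeExpr A} (h : Nle x y) :
    NDer (.conj x (.neg y)) botN := by
  have h1 : Nle (NodeExpr.conj x (.neg y)) (.conj y (.neg y)) :=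
    nle_conj_intro (nle_trans (nle_conj_left x (.neg y)) h) (nle_conj_right x (.neg y))
  exact nle_bot_iff (nle_trans h1 (nle_of_nder (conj_bot y)))

/-- From `ψ∧w ≤ ⊥`: `ψ ≤ ¬w`. -/
lemma nle_neg_of_conj_bot {p w : NodeExpr A} (h : Nle (.conj p w) botN) :
    Nle p (.neg w) := by
  have e : NDer p (nOr (.conj p (.neg w)) (.conj p w)) := wdist p w
  have e2 : NDer p (nOr (.conj p (.neg w)) botN) :=
    e.trans (nder_or_congr (NDer.refl _) (nle_bot_iff h))
  have e3 : NDer p (.conj p (.neg w)) :=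
    e2.trans ((nor_comm _ _).trans (nle_bot (.conj p (.neg w))))
  exact nle_congr e3.symm (NDer.refl _) (nle_conj_right p (.neg w))

/-! ### Tests and diamonds -/

lemma test_mono {x y : NodeExpr A} (h : Nle x y) : Ple (.test x) (.test y) :=
  (PDer.prAx3 x y).symm.trans (PDer.congr_test h)

lemma ple_test_eps (x : NodeExpr A) : Ple (.test x) (.eps : PathExpr A) :=
  ple_congr (PDer.refl _) PDer.prAx2 (test_mono (nle_top x))

lemma eps_em (x : NodeExpr A) :
    PDer (.eps : PathExpr A) (.union (.test x) (.test (.neg x))) :=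
  PDer.prAx2.symm.trans ((PDer.congr_test (em x).symm).trans (PDer.prAx3 x (.neg x)))

lemma test_neg_comp_bot (x : NodeExpr A) :
    PDer (.comp (.test (.neg x)) (.test x)) botP := by
  have h : PDer (PathExpr.test (.neg x)) (.comp .eps (.test (.neg (.diam (.test x))))) :=
    ((PDer.congr_test (NDer.congr_neg (NDer.ndAx2 x).symm)).trans (PDer.isAx5l _).symm)
  exact (PDer.congr_comp h (PDer.refl _)).trans (PDer.prAx1 .eps (.test x))

lemma test_comp_neg_bot (x : NodeExpr A) :
    PDer (.comp (.test x) (.test (.neg x))) botP := by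
  have h : PDer (PathExpr.test x) (.test (.neg (.neg x))) := PDer.congr_test (dn x).symm
  exact (PDer.congr_comp h (PDer.refl _)).trans (test_neg_comp_bot (.neg x))

/-- If `ψ ≤ θ` then `[ψ] ≡ [ψ][θ]`. -/
lemma test_absorb {p t : NodeExpr A} (h : Nle p t) :
    PDer (.test p) (.comp (.test p) (.test t)) := by
  have e1 : PDer (PathExpr.test p) (.comp (.test p) (.union (.test t) (.test (.neg t)))) :=
    (PDer.isAx5r _).symm.trans (PDer.congr_comp (PDer.refl _) (eps_em t))
  have e2 : PDer (PathExpr.test p)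
      (.union (.comp (.test p) (.test t)) (.comp (.test p) (.test (.neg t)))) :=
    e1.trans (PDer.isAx6l _ _ _)
  have hb : PDer (PathExpr.comp (.test p) (.test (.neg t))) botP :=
    ple_antisymm
      (ple_trans (ple_comp (test_mono h) (ple_refl _))
        (ple_congr (PDer.refl _) (test_comp_neg_bot t) (ple_refl _)))
      (ple_bot _)
  exact e2.trans ((PDer.congr_union (PDer.refl _) hb).trans
    ((PDer.isAx2 _ _).trans (PDer.isAx7 _)))

lemma nle_diam {a b : PathExpr A} (h : Ple a b) : Nle (.diam a) (.diam b) :=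
  (NDer.ndAx3 a b).symm.trans (NDer.congr_diam h)

lemma nle_diam_comp (a b : PathExpr A) : Nle (.diam (.comp a b)) (.diam a) := by
  have h1 : Ple (PathExpr.comp a (.test (.diam b))) (.comp a .eps) :=
    ple_comp (ple_refl a) (ple_test_eps _)
  have h2 : Nle (NodeExpr.diam (.comp a (.test (.diam b)))) (.diam a) :=
    nle_congr (NDer.refl _) (NDer.congr_diam (PDer.isAx5r a)) (nle_diam h1)
  exact nle_trans (nle_of_nder (NDer.ndAx4 a b)) h2

/-- `dPath ψ α ≡ (↓[ψ])α`. -/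
lemma dPath_assoc (p : NodeExpr A) (a : PathExpr A) :
    PDer (dPath p a) (.comp (.comp .down (.test p)) a) := PDer.isAx4 _ _ _

/-- If `ψ ≤ θ` then `dPath ψ a ≡ (↓[ψ])([θ]a)`. -/
lemma dPath_insert_test {p t : NodeExpr A} (h : Nle p t) (a : PathExpr A) :
    PDer (dPath p a) (.comp (.comp .down (.test p)) (.comp (.test t) a)) := by
  have e1 : PDer (dPath p a) (.comp .down (.comp (.comp (.test p) (.test t)) a)) :=
    PDer.congr_comp (PDer.refl _) (PDer.congr_comp (test_absorb h) (PDer.refl a))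
  have e2 : PDer (PathExpr.comp (.comp (.test p) (.test t)) a)
      (.comp (.test p) (.comp (.test t) a)) := (PDer.isAx4 _ _ _).symm
  exact (e1.trans (PDer.congr_comp (PDer.refl _) e2)).trans (PDer.isAx4 _ _ _)

/-! ### The two key derivations -/

/-- If `⟨γ≠γ⟩` is entailed by `ψ`, then `X ≤ Y`. -/
lemma keyA {p : NodeExpr A} {a g : PathExpr A} (h : Nle p (.neqTest g g)) :
    Nle (.neqTest (dPath p a) (dPath p a)) (.neqTest (dPath p g) (dPath p g)) := by
  set H : PathExpr A := .comp .down (.test p) with hH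
  -- X ≤ ⟨dPath p a⟩ ≤ ⟨H⟩
  have s1 : Nle (NodeExpr.neqTest (dPath p a) (dPath p a)) (.diam (dPath p a)) :=
    NDer.neqAx4 _ _
  have s2 : Nle (NodeExpr.diam (dPath p a)) (.diam H) :=
    nle_congr (NDer.congr_diam (dPath_assoc p a)).symm (NDer.refl _)
      (nle_diam_comp H a)
  -- ⟨H⟩ ≡ ⟨H[⟨g≠g⟩]⟩
  have s3 : PDer H (.comp H (.test (.neqTest g g))) := by
    have e1 : PDer H (.comp .down (.comp (.test p) (.test (.neqTest g g)))) :=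
      PDer.congr_comp (PDer.refl _) (test_absorb h)
    exact e1.trans (PDer.isAx4 _ _ _)
  have s4 : Nle (NodeExpr.diam H) (.neqTest (.comp H g) (.comp H g)) :=
    nle_congr (NDer.congr_diam s3).symm (NDer.refl _)
      (NDer.neqAx5 H g g)
  have s5 : NDer (NodeExpr.neqTest (.comp H g) (.comp H g))
      (.neqTest (dPath p g) (dPath p g)) :=
    NDer.congr_neqTest (dPath_assoc p g).symm (dPath_assoc p g).symm
  exact nle_trans s1 (nle_trans s2 (nle_trans s4 (nle_of_nder s5)))

/-- If `ψ ≤ ¬⟨g≠a⟩ ∧ ⟨g⟩` then `⟨G ≠ ↓[ψ]a⟩ ≤ ⟨G ≠ ↓[ψ]g⟩`. -/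
lemma keyB {p : NodeExpr A} {a g : PathExpr A}
    (h : Nle p (.conj (.neg (.neqTest g a)) (.diam g))) (G : PathExpr A) :
    Nle (.neqTest G (dPath p a)) (.neqTest G (dPath p g)) := by
  set H : PathExpr A := .comp .down (.test p) with hH
  set t : NodeExpr A := .conj (.neg (.neqTest g a)) (.diam g) with ht
  have ax : Nle (NodeExpr.neqTest G (.comp H (.comp (.test t) a))) (.neqTest G (.comp H g)) :=
    NDer.neqAx9 g a G H
  have e1 : PDer (dPath p a) (.comp H (.comp (.test t) a)) := dPath_insert_test h a
  have e2 : PDer (PathExpr.comp H g) (dPath p g) := (dPath_assoc p g).symm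
  exact nle_congr (NDer.congr_neqTest (PDer.refl G) e1).symm
    (NDer.congr_neqTest (PDer.refl G) e2) ax

/-! ### Conjuncts -/

lemma nle_of_isConjunct : ∀ {p d : NodeExpr A}, IsConjunct d p → Nle p d
  | .conj f g, d, h => by
      rcases List.mem_append.1 h with h | h
      · exact nle_trans (nle_conj_left f g) (nle_of_isConjunct h)
      · exact nle_trans (nle_conj_right f g) (nle_of_isConjunct h)
  | .lab a, d, h => by
      rw [List.mem_singleton.1 h]; exact nle_refl _
  | .neg f, d, h => by
      rw [List.mem_singleton.1 h]; exact nle_refl _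
  | .diam a, d, h => by
      rw [List.mem_singleton.1 h]; exact nle_refl _
  | .eqTest a b, d, h => by
      rw [List.mem_singleton.1 h]; exact nle_refl _
  | .neqTest a b, d, h => by
      rw [List.mem_singleton.1 h]; exact nle_refl _

lemma conjuncts_foldl_sub (C : List (NodeExpr A)) :
    ∀ (L : List (NodeExpr A)) (acc : NodeExpr A),
      conjuncts acc ⊆ conjuncts (L.foldl
        (fun acc d => NodeExpr.conj acc (if d ∈ C then d else .neg d)) acc)
  | [], acc => by simp [List.foldl]
  | e :: L, acc => by
      intro x hx
      exact conjuncts_foldl_sub C L _ (List.mem_append_left _ hx)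

lemma mem_conjuncts_foldl (C : List (NodeExpr A)) :
    ∀ (L : List (NodeExpr A)) (acc : NodeExpr A) {d x : NodeExpr A}, d ∈ L →
      x ∈ conjuncts (if d ∈ C then d else NodeExpr.neg d) →
      x ∈ conjuncts (L.foldl
        (fun acc d => NodeExpr.conj acc (if d ∈ C then d else .neg d)) acc)
  | [], acc, d, x, hd, hx => by cases hd
  | e :: L, acc, d, x, hd, hx => by
      rcases List.mem_cons.1 hd with rfl | hd
      · exact conjuncts_foldl_sub C L _ (List.mem_append_right _ hx)
      · exact mem_conjuncts_foldl C L _ hd hx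

end Aux
end XPath


/-- If `⟨↓[ψ]α ≠ ↓[ψ]α⟩ ∧ ¬⟨↓[ψ]γ ≠ ↓[ψ]γ⟩` is `XP`-consistent and `¬⟨α ≠ α⟩`
is a conjunct of `ψ`, then `¬⟨α = γ⟩` is a conjunct of `ψ`. -/
theorem XPath.paraverif {A : Type} [Fintype A] (hA : 1 < Fintype.card A)
    (n : ℕ) (ψ : NodeExpr A) (hψ : ψ ∈ Nnf A n)
    (α γ : PathExpr A) (hα : α ∈ Pnf A n) (hγ : γ ∈ Pnf A n)
    (hcons : NConsistent (NodeExpr.conj (.neqTest (dPath ψ α) (dPath ψ α))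
      (.neg (.neqTest (dPath ψ γ) (dPath ψ γ)))))
    (hconj : IsConjunct (.neg (.neqTest α α)) ψ) :
    IsConjunct (.neg (.eqTest α γ)) ψ := by
  classical
  cases n with
  | zero =>
      exfalso
      have hα' : α = .eps := by simpa [Pnf, NF] using hα
      have hγ' : γ = .eps := by simpa [Pnf, NF] using hγ
      subst hα'; subst hγ'
      exact hcons (conj_bot _)
  | succ m =>
      -- Unfold the shape of level-(m+1) normal forms.
      have hψ' : ψ ∈ (NF A (m+1)).2 := hψ
      have hα' : α ∈ (NF A (m+1)).1 := hα
      have hγ' : γ ∈ (NF A (m+1)).1 := hγ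
      rw [NF] at hψ' hα' hγ'
      set P : List (PathExpr A) := (NF A m).1 with hP
      set N : List (NodeExpr A) := (NF A m).2 with hN
      set P' : List (PathExpr A) :=
        .eps :: N.flatMap fun ψ => P.map fun β => PathExpr.comp .down (.comp (.test ψ) β)
        with hP'
      set D : List (NodeExpr A) :=
        (P'.flatMap fun α => P'.map fun β => NodeExpr.eqTest α β) ++
        (P'.flatMap fun α => P'.map fun β => NodeExpr.neqTest α β) with hD
      have hψ2 : ψ ∈ (D.sublists.flatMap fun C =>
          (Finset.univ : Finset A).toList.map fun a => mkNF a C D).filter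
            fun φ => decide (NConsistent φ) := hψ'
      obtain ⟨hmem, -⟩ := List.mem_filter.1 hψ2
      obtain ⟨C, -, hmem2⟩ := List.mem_flatMap.1 hmem
      obtain ⟨a, -, rfl⟩ := List.mem_map.1 hmem2
      have hαP : α ∈ P' := hα'
      have hγP : γ ∈ P' := hγ'
      have heqD : NodeExpr.eqTest α γ ∈ D :=
        List.mem_append_left _
          (List.mem_flatMap.2 ⟨α, hαP, List.mem_map.2 ⟨γ, hγP, rfl⟩⟩)
      have hneqD : NodeExpr.neqTest γ γ ∈ D :=
        List.mem_append_right _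
          (List.mem_flatMap.2 ⟨γ, hγP, List.mem_map.2 ⟨γ, hγP, rfl⟩⟩)
      have hnaa : Nle (mkNF a C D) (.neg (.neqTest α α)) := nle_of_isConjunct hconj
      by_cases hgg : NodeExpr.neqTest γ γ ∈ C
      · -- ⟨γ≠γ⟩ is a conjunct: contradiction via keyA
        exfalso
        have hc : IsConjunct (NodeExpr.neqTest γ γ) (mkNF a C D) := by
          have := mem_conjuncts_foldl C D (.lab a) hneqD
            (x := NodeExpr.neqTest γ γ) (by rw [if_pos hgg]; exact List.mem_singleton.2 rfl)
          exact this
        exact hcons (conj_neg_bot (keyA (nle_of_isConjunct hc)))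
      · have hngg : Nle (mkNF a C D) (.neg (.neqTest γ γ)) := by
          refine nle_of_isConjunct (mem_conjuncts_foldl C D (.lab a) hneqD ?_)
          rw [if_neg hgg]; exact List.mem_singleton.2 rfl
        by_cases heqC : NodeExpr.eqTest α γ ∈ C
        · -- ⟨α=γ⟩ is a conjunct: contradiction via keyB
          exfalso
          have heqNle : Nle (mkNF a C D) (.eqTest α γ) := by
            refine nle_of_isConjunct (mem_conjuncts_foldl C D (.lab a) heqD ?_)
            rw [if_pos heqC]; exact List.mem_singleton.2 rfl
          set p : NodeExpr A := mkNF a C D with hp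
          -- ψ ≤ ¬(⟨α≠α⟩ ∨ ⟨γ≠γ⟩)
          have hnor : Nle p (.neg (nOr (.neqTest α α) (.neqTest γ γ))) := by
            have h1 : Nle p (.conj (.neg (.neqTest α α)) (.neg (.neqTest γ γ))) :=
              nle_conj_intro hnaa hngg
            have h2 : NDer (NodeExpr.conj (.neg (.neqTest α α)) (.neg (.neqTest γ γ)))
                (.neg (nOr (.neqTest α α) (.neqTest γ γ))) :=
              (conj_as _ _).trans (NDer.congr_neg (nder_or_congr (dn _) (dn _)))
            exact nle_trans h1 (nle_of_nder h2)
          -- ψ ∧ ⟨α≠γ⟩ ≤ ⊥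
          have hbot : Nle (NodeExpr.conj p (.neqTest α γ)) botN := by
            have step1 : Nle (NodeExpr.conj (.neqTest α γ) (.eqTest α γ))
                (nOr (.neqTest α α) (.neqTest γ γ)) := NDer.neqAx7 α α γ γ
            have s1 : Nle (NodeExpr.conj p (.neqTest α γ))
                (nOr (.neqTest α α) (.neqTest γ γ)) :=
              nle_trans (nle_conj_intro (nle_conj_right _ _)
                (nle_trans (nle_conj_left _ _) heqNle)) step1
            have s2 : Nle (NodeExpr.conj p (.neqTest α γ))
                (.neg (nOr (.neqTest α α) (.neqTest γ γ))) :=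
              nle_trans (nle_conj_left _ _) hnor
            exact nle_trans (nle_conj_intro s1 s2) (nle_of_nder (conj_bot _))
          have hnw : Nle p (.neg (.neqTest α γ)) := nle_neg_of_conj_bot hbot
          have hdg : Nle p (.diam γ) :=
            nle_trans heqNle (nle_trans (nle_of_nder (NDer.eqAx1 α γ)) (NDer.eqAx4 γ α))
          have hθ : Nle p (.conj (.neg (.neqTest γ α)) (.diam γ)) :=
            nle_conj_intro
              (nle_trans hnw (nle_of_nder (NDer.congr_neg (NDer.neqAx1 α γ)))) hdg
          have s1 := keyB hθ (dPath p α)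
          have s3 := keyB hθ (dPath p γ)
          have XleY : Nle (NodeExpr.neqTest (dPath p α) (dPath p α))
              (.neqTest (dPath p γ) (dPath p γ)) :=
            nle_trans s1 (nle_trans (nle_of_nder (NDer.neqAx1 _ _)) s3)
          exact hcons (conj_neg_bot XleY)
        · -- ¬⟨α=γ⟩ is a conjunct: done
          refine mem_conjuncts_foldl C D (.lab a) heqD ?_
          rw [if_neg heqC]; exact List.mem_singleton.2 rfl
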